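/- Let T be a tree of finite strictly increasing sequences of natural numbers, and let φ : ℕ → ℕ be injective. Define the Solovay open set W_φ(T) = {f ∈ [ℕ]^ℕ : (∃ k, ∀ τ with |τ| = k and τ(i) ≤ f(i) for all i < k, τ ∉ T) and f(0), f(1) ∈ range(φ)}. If T has no infinite path, then W_φ(T) has a homogeneous solution landing in W_φ(T); moreover if φ is surjective then W_φ(T) = [ℕ]^ℕ. -/

import Mathlib

/-- The length-`k` initial segment of `f : ℕ → ℕ` as a list. -/
def initSeg (f : ℕ → ℕ) (k : ℕ) : List ℕ := List.ofFn (fun i : Fin k => f i)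

/-- `f` is a path through the tree `T`. -/
def IsPath (T : Set (List ℕ)) (f : ℕ → ℕ) : Prop := ∀ k, initSeg f k ∈ T

/-- The Solovay open set `W_φ(T)`. -/
def SolovaySet (φ : ℕ → ℕ) (T : Set (List ℕ)) (f : ℕ → ℕ) : Prop :=
  (∃ k, ∀ τ : List ℕ, τ.length = k →
      (∀ i (h : i < τ.length), τ.get ⟨i, h⟩ ≤ f i) → τ ∉ T) ∧
    f 0 ∈ Set.range φ ∧ f 1 ∈ Set.range φ

/-- König-style key lemma. -/
theorem key_lemma (T : Set (List ℕ))
    (hTree : ∀ σ τ : List ℕ, σ <+: τ → τ ∈ T → σ ∈ T)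
    (hWF : ¬ ∃ x : ℕ → ℕ, IsPath T x) (f : ℕ → ℕ) :
    ∃ k, ∀ τ : List ℕ, τ.length = k →
      (∀ i (h : i < τ.length), τ.get ⟨i, h⟩ ≤ f i) → τ ∉ T := by
  by_contra h
  push_neg at h
  set Bdd : List ℕ → Prop := fun τ => ∀ i (h : i < τ.length), τ.get ⟨i, h⟩ ≤ f i with hBdd
  set Good : List ℕ → Prop := fun σ => ∀ k, ∃ τ, τ ∈ T ∧ k ≤ τ.length ∧ Bdd τ ∧ σ <+: τ
    with hGood
  have good_nil : Good [] := by
    intro k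
    obtain ⟨τ, hlen, hb, hT⟩ := h k
    exact ⟨τ, hT, hlen.ge, hb, List.nil_prefix⟩
  have good_mem : ∀ σ, Good σ → σ ∈ T := by
    intro σ hσ
    obtain ⟨τ, hT, _, _, hpre⟩ := hσ 0
    exact hTree σ τ hpre hT
  have step : ∀ σ, Good σ → ∃ m, m ≤ f σ.length ∧ Good (σ ++ [m]) := by
    intro σ hσ
    by_contra hc
    push_neg at hc
    have hc' : ∀ m : ℕ, ∃ k, m ≤ f σ.length → ∀ τ,
        ¬ (τ ∈ T ∧ k ≤ τ.length ∧ Bdd τ ∧ σ ++ [m] <+: τ) := by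
      intro m
      by_cases hm : m ≤ f σ.length
      · have := hc m hm
        simp only [hGood] at this
        push_neg at this
        obtain ⟨k, hk⟩ := this
        exact ⟨k, fun _ τ ⟨hT, hlen, hb, hpre⟩ => hk τ hT hlen hb hpre⟩
      · exact ⟨0, fun hm' => absurd hm' hm⟩
    choose kk hkk using hc'
    set K := (Finset.range (f σ.length + 1)).sup kk + σ.length + 1 with hK
    obtain ⟨τ, hT, hlen, hb, hpre⟩ := hσ K
    have hσlt : σ.length < τ.length := by omega
    set m₀ := τ.get ⟨σ.length, hσlt⟩ with hm₀
    have hm₀le : m₀ ≤ f σ.length := hb σ.length hσlt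
    have hpre' : σ ++ [m₀] <+: τ := by
      have htake : τ.take σ.length = σ := List.prefix_iff_eq_take.mp hpre ▸ rfl
      have : τ.take (σ.length + 1) = σ ++ [m₀] := by
        rw [List.take_succ, htake]
        simp [List.getElem?_eq_getElem hσlt, hm₀]
      exact this ▸ List.take_prefix _ _
    have hKle : kk m₀ ≤ τ.length := by
      have : kk m₀ ≤ (Finset.range (f σ.length + 1)).sup kk :=
        Finset.le_sup (Finset.mem_range.mpr (by omega))
      omega
    exact hkk m₀ hm₀le τ ⟨hT, hKle, hb, hpre'⟩
  choose nxt hnxt1 hnxt2 using step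
  set seq : ℕ → {σ : List ℕ // Good σ} :=
    fun n => Nat.rec ⟨[], good_nil⟩ (fun _ p => ⟨p.1 ++ [nxt p.1 p.2], hnxt2 p.1 p.2⟩) n
    with hseqdef
  set x : ℕ → ℕ := fun n => nxt (seq n).1 (seq n).2 with hx
  have hseq : ∀ n, (seq (n+1)).1 = (seq n).1 ++ [x n] := fun n => rfl
  have hinit : ∀ k, initSeg x k = (seq k).1 := by
    intro k
    induction k with
    | zero => simp [initSeg, hseqdef]
    | succ n ih =>
      rw [hseq n, ← ih]
      show List.ofFn (fun i : Fin (n+1) => x i) = List.ofFn (fun i : Fin n => x i) ++ [x n]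
      rw [List.ofFn_succ']
      simp [List.concat_eq_append, Fin.last]
  exact hWF ⟨x, fun k => (hinit k) ▸ good_mem _ (seq k).2⟩

theorem stmt5 (T : Set (List ℕ))
    (hTree : ∀ σ τ : List ℕ, σ <+: τ → τ ∈ T → σ ∈ T)
    (hInc : ∀ σ ∈ T, List.Chain' (· < ·) σ)
    (φ : ℕ → ℕ) (hφ : Function.Injective φ)
    (hWF : ¬ ∃ x : ℕ → ℕ, IsPath T x) :
    (∃ f : ℕ → ℕ, StrictMono f ∧
        ∀ g : ℕ → ℕ, StrictMono g → SolovaySet φ T (f ∘ g)) ∧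
      (Function.Surjective φ →
        ∀ f : ℕ → ℕ, StrictMono f → SolovaySet φ T f) := by
  constructor
  · have hinf : (setOf (· ∈ Set.range φ)).Infinite := by
      exact Set.infinite_range_of_injective hφ
    refine ⟨Nat.nth (· ∈ Set.range φ), Nat.nth_strictMono hinf, fun g hg => ?_⟩
    exact ⟨key_lemma T hTree hWF _, Nat.nth_mem_of_infinite hinf _,
      Nat.nth_mem_of_infinite hinf _⟩
  · intro hsurj f _
    exact ⟨key_lemma T hTree hWF f, hsurj (f 0), hsurj (f 1)⟩
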